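/- Let S be a finite p-group for odd p, and let L be a subgroup with 𝔛(S) ≤ L ≤ S such that L/𝔛(S) is contained in the center of S/𝔛(S). Then 𝔛(L) = 𝔛(S). -/

import Mathlib

/-- Iterated commutator of subgroups: `[A,B;0] = A`, `[A,B;k+1] = ⁅[A,B;k], B⁆`,
so `[A,B;1] = ⁅A,B⁆` and `[A,B;k] = [[A,B;k-1],B]`. -/
def iterCommutator {G : Type*} [Group G] (A B : Subgroup G) : ℕ → Subgroup G
  | 0 => A
  | k + 1 => ⁅iterCommutator A B k, B⁆

/-- `Ω₁(P)`: the subgroup generated by the elements of `P` of order dividing `p`. -/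
def Omega1 {G : Type*} [Group G] (p : ℕ) (P : Subgroup G) : Subgroup G :=
  Subgroup.closure {x | x ∈ P ∧ x ^ p = 1}

/-- Oliver's condition (∗) for a chain `⊥ = Q 0 ≤ Q 1 ≤ ⋯ ≤ Q n` of normal subgroups:
`[Ω₁(C_G(Q i)), Q (i+1); p-1] = 1` for all `i < n`. -/
def IsOliverChain {G : Type*} [Group G] (p : ℕ) (Q : ℕ → Subgroup G) (n : ℕ) : Prop :=
  Q 0 = ⊥ ∧ (∀ i < n, Q i ≤ Q (i + 1)) ∧ (∀ i ≤ n, (Q i).Normal) ∧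
    ∀ i < n,
      iterCommutator (Omega1 p (Subgroup.centralizer (Q i : Set G))) (Q (i + 1)) (p - 1) = ⊥

/-- A (normal) subgroup `K` admits a chain witnessing Oliver's condition (∗). -/
def HasOliverChain {G : Type*} [Group G] (p : ℕ) (K : Subgroup G) : Prop :=
  ∃ n Q, IsOliverChain p Q n ∧ Q n = K

/-- The Oliver subgroup `𝔛(G)`: the largest normal subgroup of `G` admitting a chain of
`G`-normal subgroups satisfying Oliver's condition (∗). -/
def OliverSubgroup (p : ℕ) (G : Type*) [Group G] : Subgroup G :=
  sSup {K | HasOliverChain p K}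

/-- `E` is an elementary abelian `p`-subgroup. -/
def IsElemAbelian {G : Type*} [Group G] (p : ℕ) (E : Subgroup G) : Prop :=
  (∀ a ∈ E, ∀ b ∈ E, a * b = b * a) ∧ ∀ x ∈ E, x ^ p = 1

/-- The rank of a finite elementary abelian `p`-subgroup `E` (so `|E| = p ^ elemRank p E`). -/
noncomputable def elemRank {G : Type*} [Group G] (p : ℕ) (E : Subgroup G) : ℕ :=
  (Nat.card E).factorization p

/-- The `p`-rank of `G`: the maximal rank of an elementary abelian `p`-subgroup. -/
noncomputable def pRank (p : ℕ) (G : Type*) [Group G] : ℕ :=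
  sSup {n | ∃ E : Subgroup G, IsElemAbelian p E ∧ elemRank p E = n}

/-- The Thompson subgroup `J(G)`, generated by all elementary abelian `p`-subgroups of
rank equal to the `p`-rank of `G`. -/
def Thompson (p : ℕ) (G : Type*) [Group G] : Subgroup G :=
  sSup {E | IsElemAbelian p E ∧ elemRank p E = pRank p G}

open scoped commutatorElement

open Subgroup

section Aux
variable {G : Type*} [Group G] {p : ℕ}

lemma Omega1_le (P : Subgroup G) : Omega1 p P ≤ P :=
  (Subgroup.closure_le P).mpr (fun _ hx => hx.1)

lemma Omega1_mono {P Q : Subgroup G} (h : P ≤ Q) : Omega1 p P ≤ Omega1 p Q :=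
  Subgroup.closure_mono (fun _ hx => ⟨h hx.1, hx.2⟩)

lemma map_Omega1_le {H : Type*} [Group H] (f : G →* H) (P : Subgroup G) :
    (Omega1 p P).map f ≤ Omega1 p (P.map f) := by
  rw [Omega1, MonoidHom.map_closure]
  apply Subgroup.closure_mono
  rintro _ ⟨x, ⟨hxP, hxp⟩, rfl⟩
  exact ⟨⟨x, hxP, rfl⟩, by rw [← map_pow, hxp, map_one]⟩

lemma Omega1_map_le {H : Type*} [Group H] {f : G →* H} (hf : Function.Injective f)
    (P : Subgroup G) : Omega1 p (P.map f) ≤ (Omega1 p P).map f := by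
  apply (Subgroup.closure_le _).mpr
  rintro y ⟨⟨x, hxP, rfl⟩, hyp⟩
  refine Subgroup.mem_map.mpr ⟨x, Subgroup.subset_closure ⟨hxP, hf ?_⟩, rfl⟩
  rw [map_pow, hyp, map_one]

lemma Omega1_normal {P : Subgroup G} (hP : P.Normal) : (Omega1 p P).Normal := by
  constructor
  intro n hn g
  induction hn using closure_induction with
  | mem x hx => exact subset_closure ⟨hP.conj_mem x hx.1 g,
      by rw [conj_pow, hx.2, mul_one, mul_inv_cancel]⟩
  | one => simpa using one_mem _
  | mul x y _ _ hx hy => simpa [mul_assoc] using mul_mem hx hy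
  | inv x _ hx => simpa [conj_inv, mul_assoc] using inv_mem hx

lemma centralizer_normal' {P : Subgroup G} (hP : P.Normal) :
    (Subgroup.centralizer (P : Set G)).Normal := by
  constructor
  intro n hn g
  rw [mem_centralizer_iff] at hn ⊢
  intro x hx
  have h1 := hn (g⁻¹ * x * g) (hP.conj_mem' x hx g)
  calc x * (g * n * g⁻¹) = g * ((g⁻¹ * x * g) * n) * g⁻¹ := by group
    _ = g * (n * (g⁻¹ * x * g)) * g⁻¹ := by rw [h1]
    _ = (g * n * g⁻¹) * x := by group

lemma iterCommutator_mono {A A' B B' : Subgroup G} (hA : A ≤ A') (hB : B ≤ B') (k : ℕ) :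
    iterCommutator A B k ≤ iterCommutator A' B' k := by
  induction k with
  | zero => exact hA
  | succ k ih => exact Subgroup.commutator_mono ih hB

lemma iterCommutator_eq_bot_of_le {A B : Subgroup G} {j k : ℕ}
    (h : iterCommutator A B j = ⊥) (hjk : j ≤ k) : iterCommutator A B k = ⊥ := by
  obtain ⟨d, rfl⟩ := Nat.exists_eq_add_of_le hjk
  clear hjk
  induction d with
  | zero => exact h
  | succ d ih =>
    show ⁅iterCommutator A B (j + d), B⁆ = ⊥
    rw [ih, commutator_bot_left]

lemma map_iterCommutator {H : Type*} [Group H] (f : G →* H) (A B : Subgroup G) (k : ℕ) :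
    (iterCommutator A B k).map f = iterCommutator (A.map f) (B.map f) k := by
  induction k with
  | zero => rfl
  | succ k ih => show map f ⁅_, _⁆ = ⁅_, _⁆; rw [Subgroup.map_commutator, ih]

end Aux

section Aux2
variable {G : Type*} [Group G] {p : ℕ}

lemma commutator_sup_le_key {X B C N : Subgroup G}
    (hXB : X ≤ Subgroup.centralizer (B : Set G))
    (hXC : ∀ x ∈ X, ∀ c ∈ C, ⁅x, c⁆ ∈ N)
    (hN : ∀ g ∈ B ⊔ C, ∀ n ∈ N, g * n * g⁻¹ ∈ N) :
    ⁅X, B ⊔ C⁆ ≤ N := by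
  rw [Subgroup.commutator_le]
  intro x hx t ht
  rw [sup_eq_closure] at ht
  induction ht using closure_induction with
  | mem s hs =>
    rcases hs with hs | hs
    · have hc : Commute x s := (hXB hx s hs).symm
      rw [commutatorElement_eq_one_iff_commute.mpr hc]
      exact one_mem N
    · exact hXC x hx s hs
  | one => rw [commutatorElement_one_right]; exact one_mem N
  | mul s t hs ht ihs iht =>
    have hsmem : s ∈ B ⊔ C := by rw [sup_eq_closure]; exact hs
    have key : ⁅x, s * t⁆ = ⁅x, s⁆ * (s * ⁅x, t⁆ * s⁻¹) := by group
    rw [key]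
    exact mul_mem ihs (hN s hsmem _ iht)
  | inv s hs ihs =>
    have hsmem : s ∈ B ⊔ C := by rw [sup_eq_closure]; exact hs
    have key : ⁅x, s⁻¹⁆ = s⁻¹ * ⁅x, s⁆⁻¹ * s := by group
    rw [key]
    have := hN s⁻¹ (inv_mem hsmem) _ (inv_mem ihs)
    simpa using this

lemma iterCommutator_sup_le {A B C : Subgroup G} {J : ℕ → Subgroup G}
    (hA : A.Normal) (hAB : A ≤ Subgroup.centralizer (B : Set G))
    (hJ0 : A ≤ J 0) (hJsucc : ∀ k, ∀ x ∈ J k ⊓ A, ∀ c ∈ C, ⁅x, c⁆ ∈ J (k + 1))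
    (hJnorm : ∀ k, ∀ g ∈ B ⊔ C, ∀ n ∈ J k, g * n * g⁻¹ ∈ J k) (k : ℕ) :
    iterCommutator A (B ⊔ C) k ≤ J k ⊓ A := by
  induction k with
  | zero => exact le_inf hJ0 le_rfl
  | succ k ih =>
    show ⁅iterCommutator A (B ⊔ C) k, B ⊔ C⁆ ≤ _
    have h1 : ⁅iterCommutator A (B ⊔ C) k, B ⊔ C⁆ ≤ ⁅J k ⊓ A, B ⊔ C⁆ :=
      Subgroup.commutator_mono ih le_rfl
    refine h1.trans (commutator_sup_le_key (le_trans inf_le_right hAB) ?_ ?_)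
    · intro x hx c hc
      obtain ⟨hxJ, hxA⟩ := Subgroup.mem_inf.mp hx
      refine Subgroup.mem_inf.mpr ⟨hJsucc k x hx c hc, ?_⟩
      have key : ⁅x, c⁆ = x * (c * x * c⁻¹)⁻¹ := by group
      rw [key]
      exact mul_mem hxA (inv_mem (hA.conj_mem x hxA c))
    · intro g hg n hn
      obtain ⟨hn1, hn2⟩ := Subgroup.mem_inf.mp hn
      exact Subgroup.mem_inf.mpr ⟨hJnorm (k + 1) g hg n hn1, hA.conj_mem n hn2 g⟩
end Aux2

section Aux3
variable {G : Type*} [Group G] {p : ℕ}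

lemma iterCommutator_normal {A B : Subgroup G} (hA : A.Normal) (hB : B.Normal) (k : ℕ) :
    (iterCommutator A B k).Normal := by
  induction k with
  | zero => exact hA
  | succ k ih =>
    haveI := ih
    haveI := hB
    exact Subgroup.commutator_normal _ _

lemma HasOliverChain.normal {K : Subgroup G} (hK : HasOliverChain p K) : K.Normal := by
  obtain ⟨n, Q, ⟨_, _, hn, _⟩, htop⟩ := hK
  exact htop ▸ hn n le_rfl

lemma hasOliverChain_bot : HasOliverChain p (⊥ : Subgroup G) :=
  ⟨0, fun _ => ⊥, ⟨rfl, by omega, fun _ _ => inferInstance, by omega⟩, rfl⟩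

lemma HasOliverChain.extend {K : Subgroup G} (hK : HasOliverChain p K)
    {R : ℕ → Subgroup G} {m : ℕ} (hR0 : R 0 = K)
    (hmono : ∀ i < m, R i ≤ R (i + 1)) (hnorm : ∀ i ≤ m, (R i).Normal)
    (hcomm : ∀ i < m, iterCommutator (Omega1 p (Subgroup.centralizer (R i : Set G)))
      (R (i + 1)) (p - 1) = ⊥) :
    HasOliverChain p (R m) := by
  obtain ⟨n, Q, ⟨h0, hm, hn, hc⟩, htop⟩ := hK
  refine ⟨n + m, fun i => if i ≤ n then Q i else R (i - n), ⟨?_, ?_, ?_, ?_⟩, ?_⟩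
  all_goals beta_reduce
  all_goals
    have hle : ∀ i, i ≤ n → (if i ≤ n then Q i else R (i - n)) = Q i := fun i hi => if_pos hi
  all_goals
    have hge : ∀ i, n ≤ i → (if i ≤ n then Q i else R (i - n)) = R (i - n) := by
      intro i hi
      by_cases h : i ≤ n
      · have hin : i = n := le_antisymm h hi
        subst hin
        rw [if_pos le_rfl, Nat.sub_self, hR0, htop]
      · rw [if_neg h]
  · rw [hle 0 (Nat.zero_le n), h0]
  · intro i hi
    by_cases h : i < n
    · rw [hle i (by omega), hle (i + 1) (by omega)]
      exact hm i h
    · rw [hge i (by omega), hge (i + 1) (by omega), show i + 1 - n = (i - n) + 1 by omega]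
      exact hmono (i - n) (by omega)
  · intro i hi
    by_cases h : i ≤ n
    · rw [hle i h]; exact hn i h
    · rw [hge i (by omega)]; exact hnorm (i - n) (by omega)
  · intro i hi
    by_cases h : i < n
    · rw [hle i (by omega), hle (i + 1) (by omega)]
      exact hc i h
    · rw [hge i (by omega), hge (i + 1) (by omega), show i + 1 - n = (i - n) + 1 by omega]
      exact hcomm (i - n) (by omega)
  · rw [hge (n + m) (by omega), Nat.add_sub_cancel_left]

lemma HasOliverChain.sup {K₁ K₂ : Subgroup G} (h₁ : HasOliverChain p K₁)
    (h₂ : HasOliverChain p K₂) : HasOliverChain p (K₁ ⊔ K₂) := by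
  obtain ⟨n, Q, ⟨h0, hm, hn, hc⟩, htop⟩ := h₂
  haveI hK₁n : K₁.Normal := h₁.normal
  have key : HasOliverChain p ((fun i => K₁ ⊔ Q i) n) := by
    refine h₁.extend (R := fun i => K₁ ⊔ Q i) (m := n) (by beta_reduce; rw [h0, sup_bot_eq]) ?_ ?_ ?_
    · intro i hi
      exact sup_le_sup_left (hm i hi) K₁
    · intro i hi
      haveI := hn i hi
      exact Subgroup.sup_normal K₁ (Q i)
    · intro i hi
      haveI hQi : (Q i).Normal := hn i (le_of_lt hi)
      haveI hQi1 : (Q (i + 1)).Normal := hn (i + 1) hi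
      set A := Omega1 p (Subgroup.centralizer ((K₁ ⊔ Q i : Subgroup G) : Set G)) with hA
      have hAnormal : A.Normal :=
        Omega1_normal (centralizer_normal' (Subgroup.sup_normal K₁ (Q i)))
      set J : ℕ → Subgroup G :=
        fun k => iterCommutator (Omega1 p (Subgroup.centralizer ((Q i : Subgroup G) : Set G)))
          (Q (i + 1)) k with hJ
      have hJnormal : ∀ k, (J k).Normal := fun k =>
        iterCommutator_normal (Omega1_normal (centralizer_normal' hQi)) hQi1 k
      have main : iterCommutator A (K₁ ⊔ Q (i + 1)) (p - 1) ≤ J (p - 1) ⊓ A := by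
        refine iterCommutator_sup_le hAnormal ?_ ?_ ?_ ?_ (p - 1)
        · exact le_trans (Omega1_le _) (Subgroup.centralizer_le (by
            exact_mod_cast SetLike.coe_subset_coe.mpr le_sup_left))
        · exact Omega1_mono (Subgroup.centralizer_le (by
            exact_mod_cast SetLike.coe_subset_coe.mpr le_sup_right))
        · intro k x hx c hc
          exact Subgroup.commutator_mem_commutator (Subgroup.mem_inf.mp hx).1 hc
        · intro k g _ x hx
          exact (hJnormal k).conj_mem x hx g
      have hbot : J (p - 1) = ⊥ := hc i hi
      rw [hbot] at main
      beta_reduce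
      exact le_bot_iff.mp (le_trans main inf_le_left)
  rw [← htop]
  exact key

lemma hasOliverChain_oliverSubgroup (p : ℕ) (G : Type*) [Group G] [Finite G] :
    HasOliverChain p (OliverSubgroup p G) := by
  have hfin : {K : Subgroup G | HasOliverChain p K}.Finite := Set.toFinite _
  rw [OliverSubgroup, ← hfin.coe_toFinset, ← Finset.sup_id_eq_sSup]
  refine Finset.sup_induction hasOliverChain_bot (fun a ha b hb => ha.sup hb) ?_
  intro K hK
  exact (hfin.mem_toFinset.mp hK : HasOliverChain p K)

lemma le_oliverSubgroup {K : Subgroup G} (hK : HasOliverChain p K) :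
    K ≤ OliverSubgroup p G :=
  le_sSup hK

end Aux3

section Aux4
variable {p : ℕ} [Fact p.Prime]

lemma exists_ne_one_mem_center_of_normal {G : Type*} [Group G] [Finite G]
    (hG : IsPGroup p G) {N : Subgroup G} (hN : N.Normal) (hbot : N ≠ ⊥) :
    ∃ n ∈ N, n ≠ 1 ∧ n ∈ Subgroup.center G := by
  haveI := hN
  have hconj : IsPGroup p (ConjAct G) := hG.of_equiv ConjAct.toConjAct
  have hdvd : p ∣ Nat.card N := by
    have hNp : IsPGroup p N := hG.to_subgroup N
    haveI : Nontrivial N := (Subgroup.nontrivial_iff_ne_bot N).mpr hbot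
    obtain ⟨k, hk0, hk⟩ := hNp.nontrivial_iff_card.mp inferInstance
    exact hk ▸ dvd_pow_self p hk0.ne'
  have hfix : (1 : N) ∈ MulAction.fixedPoints (ConjAct G) N := by
    intro g
    apply Subtype.ext
    rw [ConjAct.Subgroup.val_conj_smul]
    simp [ConjAct.smul_def]
  obtain ⟨b, hb, hb1⟩ := hconj.exists_fixed_point_of_prime_dvd_card_of_fixed_point (α := N) hdvd hfix
  refine ⟨(b : G), b.2, ?_, ?_⟩
  · intro h
    exact hb1 (Subtype.ext (by simpa using h)).symm
  · rw [Subgroup.mem_center_iff]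
    intro g
    have := hb (ConjAct.toConjAct g)
    have hval : g * (b : G) * g⁻¹ = (b : G) := by
      have h2 := congrArg (Subtype.val) this
      rw [ConjAct.Subgroup.val_conj_smul] at h2
      simpa [ConjAct.smul_def] using h2
    calc g * (b : G) = (g * (b : G) * g⁻¹) * g := by group
      _ = (b : G) * g := by rw [hval]

lemma two_le_p_sub_one (hodd : Odd p) : 2 ≤ p - 1 := by
  have h2 : 2 ≤ p := (Fact.out (p := p.Prime)).two_le
  have : p % 2 = 1 := Nat.odd_iff.mp hodd
  omega

lemma centralizer_oliver_le {S : Type*} [Group S] [Finite S] (hS : IsPGroup p S) (hodd : Odd p) :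
    Subgroup.centralizer ((OliverSubgroup p S : Subgroup S) : Set S) ≤ OliverSubgroup p S := by
  by_contra hcon
  set X := OliverSubgroup p S with hX
  have hXchain := hasOliverChain_oliverSubgroup p S
  haveI hXn : X.Normal := hXchain.normal
  set C := Subgroup.centralizer (X : Set S) with hC
  haveI hCn : C.Normal := centralizer_normal' hXn
  haveI hMn : (X ⊔ C).Normal := Subgroup.sup_normal X C
  set π := QuotientGroup.mk' X with hπ
  have hMmap : (X ⊔ C).map π ≠ ⊥ := by
    obtain ⟨c, hcC, hcX⟩ := SetLike.not_le_iff_exists.mp hcon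
    intro hb
    have hmem : π c ∈ (X ⊔ C).map π := Subgroup.mem_map_of_mem π (le_sup_right (a := X) hcC)
    rw [hb, Subgroup.mem_bot] at hmem
    exact hcX ((QuotientGroup.eq_one_iff c).mp hmem)
  haveI hMapn : ((X ⊔ C).map π).Normal := hMn.map π (QuotientGroup.mk'_surjective X)
  have hQp : IsPGroup p (S ⧸ X) := hS.to_quotient X
  obtain ⟨zb, hzmem, hz1, hzc⟩ := exists_ne_one_mem_center_of_normal hQp hMapn hMmap
  obtain ⟨z, rfl⟩ := QuotientGroup.mk'_surjective X zb
  haveI hzpn : (Subgroup.zpowers (π z)).Normal := by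
    constructor
    intro n hn g
    have hcen : n ∈ Subgroup.center (S ⧸ X) := Subgroup.zpowers_le.mpr hzc hn
    have hcomm := Subgroup.mem_center_iff.mp hcen g
    have : g * n * g⁻¹ = n := by rw [hcomm]; group
    rwa [this]
  set W := Subgroup.comap π (Subgroup.zpowers (π z)) with hW
  haveI hWn : W.Normal := hzpn.comap π
  have hXW : X ≤ W := by
    intro x hx
    rw [Subgroup.mem_comap]
    have : π x = 1 := (QuotientGroup.eq_one_iff x).mpr hx
    rw [this]
    exact one_mem _
  have hzW : z ∈ W := Subgroup.mem_comap.mpr (Subgroup.mem_zpowers _)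
  have hzX : z ∉ X := fun h => hz1 ((QuotientGroup.eq_one_iff z).mpr h)
  have hWM : W ≤ X ⊔ C := by
    have h1 : W ≤ Subgroup.comap π ((X ⊔ C).map π) :=
      Subgroup.comap_mono (Subgroup.zpowers_le.mpr hzmem)
    rw [Subgroup.comap_map_eq, QuotientGroup.ker_mk', sup_of_le_left (le_sup_left (b := C))] at h1
    exact h1
  have hSW : ∀ s : S, ∀ w ∈ W, ⁅s, w⁆ ∈ X := by
    intro s w hw
    rw [← QuotientGroup.eq_one_iff (⁅s, w⁆), ← QuotientGroup.mk'_apply, map_commutatorElement]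
    have hwc : π w ∈ Subgroup.center (S ⧸ X) :=
      Subgroup.zpowers_le.mpr hzc (Subgroup.mem_comap.mp hw)
    exact commutatorElement_eq_one_iff_commute.mpr (Subgroup.mem_center_iff.mp hwc (π s))
  have hWchain : HasOliverChain p W := by
    have := hXchain.extend (R := fun i => if i = 0 then X else W) (m := 1) (by norm_num; exact hX) ?_ ?_ ?_
    · simpa using this
    · intro i hi
      interval_cases i
      simpa using hXW
    · intro i _
      by_cases h : i = 0
      · subst h; simpa using hXn
      · simp only [if_neg h]; exact hWn
    · intro i hi
      interval_cases i
      simp only [if_pos rfl, if_neg one_ne_zero]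
      set A := Omega1 p (Subgroup.centralizer (X : Set S)) with hA
      haveI hAn : A.Normal := Omega1_normal hCn
      have h1 : ⁅A, W⁆ ≤ X ⊓ C := by
        refine le_inf ?_ ?_
        · rw [Subgroup.commutator_le]
          intro a _ w hw
          exact hSW a w hw
        · exact le_trans (Subgroup.commutator_le_left A W) (Omega1_le _)
      have h2 : iterCommutator A W 2 = ⊥ := by
        show ⁅⁅iterCommutator A W 0, W⁆, W⁆ = ⊥
        rw [Subgroup.commutator_eq_bot_iff_le_centralizer]
        intro t ht
        have htXC : t ∈ X ⊓ C := h1 ht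
        obtain ⟨htX, htC⟩ := Subgroup.mem_inf.mp htXC
        rw [Subgroup.mem_centralizer_iff]
        intro w hw
        have hsup : X ⊔ C ≤ Subgroup.centralizer {t} := by
          refine sup_le ?_ ?_
          · intro x hx
            rw [Subgroup.mem_centralizer_iff]
            intro h hh
            rw [Set.mem_singleton_iff] at hh
            rw [hh]
            exact (Subgroup.mem_centralizer_iff.mp htC x hx).symm
          · intro c hc
            rw [Subgroup.mem_centralizer_iff]
            intro h hh
            rw [Set.mem_singleton_iff] at hh
            rw [hh]
            exact Subgroup.mem_centralizer_iff.mp hc t htX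
        have := Subgroup.mem_centralizer_iff.mp (hsup (hWM hw)) t (Set.mem_singleton_iff.mpr rfl)
        exact this.symm
      exact iterCommutator_eq_bot_of_le h2 (two_le_p_sub_one hodd)
  exact hzX (le_oliverSubgroup hWchain hzW)
end Aux4

/-- if `𝔛(S) ≤ L ≤ S` and `L/𝔛(S)` is contained in the center of
`S/𝔛(S)` (i.e. `⁅s, l⁆ ∈ 𝔛(S)` for all `l ∈ L`, `s ∈ S`), then `𝔛(L) = 𝔛(S)`. -/
theorem oliver_eq_of_central (p : ℕ) [Fact p.Prime] (hp : Odd p)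
    (S : Type*) [Group S] [Fintype S] (hS : IsPGroup p S)
    (L : Subgroup S) (hXL : OliverSubgroup p S ≤ L)
    (hcentral : ∀ l ∈ L, ∀ s : S, ⁅s, l⁆ ∈ OliverSubgroup p S) :
    Subgroup.map L.subtype (OliverSubgroup p L) = OliverSubgroup p S := by
  set X := OliverSubgroup p S with hX
  set f := L.subtype with hf
  have hfi : Function.Injective f := L.subtype_injective
  -- subgroups between X and L are normal in S
  have hnorm_between : ∀ H : Subgroup S, X ≤ H → H ≤ L → H.Normal := by
    intro H hXH hHL
    constructor
    intro h hh g
    have hkey : g * h * g⁻¹ = h * ⁅g, h⁻¹⁆⁻¹ := by group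
    rw [hkey]
    exact H.mul_mem hh (H.inv_mem (hXH (hcentral h⁻¹ (L.inv_mem (hHL hh)) g)))
  -- Part A : X ≤ map f (OliverSubgroup p L)
  have hA : X ≤ Subgroup.map f (OliverSubgroup p L) := by
    rw [hX, OliverSubgroup]
    refine sSup_le ?_
    intro K hK
    have hKX : K ≤ OliverSubgroup p S := le_oliverSubgroup hK
    have hKL : K ≤ L := hKX.trans hXL
    obtain ⟨n, Q, ⟨h0, hm, hn, hc⟩, htop⟩ := hK
    have hQtop : ∀ i ≤ n, Q i ≤ Q n := by
      have hstep : ∀ d i, i + d ≤ n → Q i ≤ Q (i + d) := by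
        intro d
        induction d with
        | zero => intro i _; exact le_rfl
        | succ d ih =>
          intro i hi
          have := ih i (by omega)
          refine this.trans ?_
          rw [show i + (d + 1) = (i + d) + 1 by omega]
          exact hm (i + d) (by omega)
      intro i hi
      have := hstep (n - i) i (by omega)
      rwa [show i + (n - i) = n by omega] at this
    have hQL : ∀ i ≤ n, Q i ≤ L := fun i hi => ((hQtop i hi).trans (htop ▸ hKL))
    have hchain' : HasOliverChain p (Subgroup.comap f K) := by
      refine ⟨n, fun i => Subgroup.comap f (Q i), ⟨?_, ?_, ?_, ?_⟩, by show Subgroup.comap f (Q n) = Subgroup.comap f K; rw [htop]⟩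
      · show Subgroup.comap f (Q 0) = ⊥
        rw [h0, MonoidHom.comap_bot, hf, Subgroup.ker_subtype]
      · intro i hi
        exact Subgroup.comap_mono (hm i hi)
      · intro i hi
        exact (hn i hi).comap f
      · intro i hi
        beta_reduce
        refine (Subgroup.map_eq_bot_iff_of_injective _ hfi).mp ?_
        rw [map_iterCommutator]
        have h1 : Subgroup.map f (Omega1 p (Subgroup.centralizer
            ((Subgroup.comap f (Q i) : Subgroup L) : Set L)))
            ≤ Omega1 p (Subgroup.centralizer ((Q i : Subgroup S) : Set S)) := by
          refine le_trans (map_Omega1_le f _) (Omega1_mono ?_)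
          intro c hc
          obtain ⟨c', hc', rfl⟩ := Subgroup.mem_map.mp hc
          rw [Subgroup.mem_centralizer_iff]
          intro x hx
          have hxL : x ∈ L := hQL i (le_of_lt hi) hx
          have hx' : (⟨x, hxL⟩ : L) ∈ Subgroup.comap f (Q i) := by
            rw [Subgroup.mem_comap]; exact hx
          have := Subgroup.mem_centralizer_iff.mp hc' ⟨x, hxL⟩ hx'
          exact congrArg Subtype.val this
        have h2 : Subgroup.map f (Subgroup.comap f (Q (i + 1))) ≤ Q (i + 1) :=
          Subgroup.map_comap_le f _
        refine le_bot_iff.mp ?_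
        rw [← hc i hi]
        exact iterCommutator_mono h1 h2 (p - 1)
    have := le_oliverSubgroup hchain'
    calc K = Subgroup.map f (Subgroup.comap f K) := by
          rw [Subgroup.map_comap_eq_self (by rw [hf, Subgroup.range_subtype]; exact hKL)]
      _ ≤ Subgroup.map f (OliverSubgroup p L) := Subgroup.map_mono this
  -- Part B : map f (OliverSubgroup p L) ≤ X
  have hB : Subgroup.map f (OliverSubgroup p L) ≤ X := by
    rw [Subgroup.map_le_iff_le_comap, OliverSubgroup]
    refine sSup_le ?_
    intro K' hK'
    rw [← Subgroup.map_le_iff_le_comap]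
    obtain ⟨n, Q, ⟨h0, hm, hn, hc⟩, htop⟩ := hK'
    have hext := (hasOliverChain_oliverSubgroup p S).extend
      (R := fun j => X ⊔ Subgroup.map f (Q j)) (m := n) ?_ ?_ ?_ ?_
    · have hle : X ⊔ Subgroup.map f (Q n) ≤ X := le_oliverSubgroup hext
      rw [htop] at hle
      exact le_sup_right.trans hle
    · beta_reduce
      rw [h0, Subgroup.map_bot, sup_bot_eq]
    · intro j hj
      exact sup_le_sup_left (Subgroup.map_mono (hm j hj)) X
    · intro j _
      exact hnorm_between _ le_sup_left (sup_le hXL (Subgroup.map_subtype_le _))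
    · intro j hj
      beta_reduce
      set Tj := X ⊔ Subgroup.map f (Q j) with hTj
      haveI hTn : Tj.Normal := hnorm_between _ le_sup_left (sup_le hXL (Subgroup.map_subtype_le _))
      set A := Omega1 p (Subgroup.centralizer (Tj : Set S)) with hA
      have hAn : A.Normal := Omega1_normal (centralizer_normal' hTn)
      have hCTX : Subgroup.centralizer (Tj : Set S) ≤ Subgroup.centralizer (X : Set S) :=
        Subgroup.centralizer_le (SetLike.coe_subset_coe.mpr le_sup_left)
      have hCXX : Subgroup.centralizer (X : Set S) ≤ X := centralizer_oliver_le hS hp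
      have hAcen : A ≤ Subgroup.centralizer (X : Set S) := (Omega1_le _).trans hCTX
      set B := Omega1 p (Subgroup.centralizer ((Q j : Subgroup L) : Set L)) with hB'
      have hAB : A ≤ Subgroup.map f B := by
        have hsub : Subgroup.centralizer (Tj : Set S)
            ≤ Subgroup.map f (Subgroup.centralizer ((Q j : Subgroup L) : Set L)) := by
          intro c hcmem
          have hcL : c ∈ L := hXL (hCXX (hCTX hcmem))
          refine Subgroup.mem_map.mpr ⟨⟨c, hcL⟩, ?_, rfl⟩
          rw [Subgroup.mem_centralizer_iff]
          intro x hx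
          apply Subtype.ext
          have hxT : (f x : S) ∈ Tj := le_sup_right (a := X) (Subgroup.mem_map_of_mem f hx)
          exact Subgroup.mem_centralizer_iff.mp hcmem (f x) hxT
        exact le_trans ((Omega1_mono hsub).trans (Omega1_map_le hfi _)) le_rfl
      set J : ℕ → Subgroup S := fun k => Subgroup.map f (iterCommutator B (Q (j + 1)) k) with hJ
      haveI hQjn : (Q j).Normal := hn j (le_of_lt hj)
      haveI hQj1n : (Q (j + 1)).Normal := hn (j + 1) hj
      have hiterLn : ∀ k, (iterCommutator B (Q (j + 1)) k).Normal := fun k =>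
        iterCommutator_normal (Omega1_normal (centralizer_normal' hQjn)) hQj1n k
      have main : iterCommutator A (X ⊔ Subgroup.map f (Q (j + 1))) (p - 1)
          ≤ J (p - 1) ⊓ A := by
        refine iterCommutator_sup_le hAn hAcen hAB ?_ ?_ (p - 1)
        · intro k x hx c hcmem
          obtain ⟨hxJ, _⟩ := Subgroup.mem_inf.mp hx
          obtain ⟨x', hx', rfl⟩ := Subgroup.mem_map.mp hxJ
          obtain ⟨c', hc', rfl⟩ := Subgroup.mem_map.mp hcmem
          have : ⁅f x', f c'⁆ = f ⁅x', c'⁆ := (map_commutatorElement f x' c').symm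
          rw [this]
          exact Subgroup.mem_map_of_mem f
            (Subgroup.commutator_mem_commutator hx' hc')
        · intro k g hg x hx
          obtain ⟨x', hx', rfl⟩ := Subgroup.mem_map.mp hx
          have hgL : g ∈ L := (sup_le hXL (Subgroup.map_subtype_le _)) hg
          have : g * f x' * g⁻¹ = f (⟨g, hgL⟩ * x' * ⟨g, hgL⟩⁻¹) := by
            simp [hf]
          rw [this]
          exact Subgroup.mem_map_of_mem f ((hiterLn k).conj_mem x' hx' ⟨g, hgL⟩)
      have hbot : J (p - 1) = ⊥ := by
        rw [hJ]
        beta_reduce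
        rw [hc j hj, Subgroup.map_bot]
      rw [hbot] at main
      exact le_bot_iff.mp (le_trans main inf_le_left)
  exact le_antisymm hB hA
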